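/- Suppose f ∈ ℤ[x] has degree nr, m ≥ 2 is an integer, and f(x) ≡ (xⁿ − 1)^r (mod m). If g is a factor of f over ℤ having no cyclotomic factors (and no root equal to 0 or a root of unity relevant to the auxiliary polynomials), then μ(g) ≥ c·(deg g)/(n·2^r), where c is the unique positive real number satisfying c·e^{c/2}·log 3 = log(3/2)·log 2. -/

import Mathlib

open Polynomial

/-- The logarithmic Mahler measure of an integer polynomial:
`μ(g) = log|lead(g)| + Σ log⁺|α|` over the complex roots `α` of `g`. -/
noncomputable def mahlerMeasure (g : Polynomial ℤ) : ℝ :=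
  Real.log |(g.leadingCoeff : ℝ)| +
    (((g.map (Int.castRingHom ℂ)).roots).map
      (fun z => Real.log (max 1 (‖z‖)))).sum

/-- `g` has no cyclotomic factors. -/
def NoCyclotomicFactor (g : Polynomial ℤ) : Prop :=
  ∀ k : ℕ, 0 < k → ¬ (Polynomial.cyclotomic k ℤ ∣ g)

/-- The logarithmic supremum norm of a complex polynomial on the unit circle. -/
noncomputable def nuC (T : Polynomial ℂ) : ℝ :=
  Real.log (sSup ((fun z => ‖T.eval z‖) '' {z : ℂ | ‖z‖ = 1}))


private lemma nat_le_two_pow (r : ℕ) : (r:ℝ) ≤ 2^r := by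
  exact_mod_cast (Nat.lt_two_pow_self (n := r)).le

private lemma nat_two_mul_le_pow {r : ℕ} (hr : 1 ≤ r) : 2*r ≤ 2^r := by
  induction r, hr using Nat.le_induction with
  | base => norm_num
  | succ n hn ih =>
    have h2 : (2:ℕ)^(n+1) = 2*2^n := by ring
    omega

private lemma nat_sq_le_pow (r : ℕ) : r^2 ≤ 2^(r+1) := by
  induction r with
  | zero => simp
  | succ n ih =>
    have h1 : 2*n+1 ≤ 2^(n+1) := by
      have := Nat.lt_two_pow_self (n := n)
      have h2 : (2:ℕ)^(n+1) = 2*2^n := by ring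
      omega
    have h3 : (n+1)^2 = n^2 + (2*n+1) := by ring
    have h4 : (2:ℕ)^(n+2) = 2^(n+1) + 2^(n+1) := by ring
    omega

private lemma nat_three_pow {r : ℕ} (hr : 2 ≤ r) : 2^(r+1) ≤ 3^r := by
  induction r, hr using Nat.le_induction with
  | base => norm_num
  | succ n hn ih =>
    have h2 : (2:ℕ)^(n+2) = 2*2^(n+1) := by ring
    have h3 : (3:ℕ)^(n+1) = 3*3^n := by ring
    omega

private lemma nat_k_le_pow {k : ℕ} (hk : 2 ≤ k) : k ≤ 2^(k-1) := by
  induction k, hk using Nat.le_induction with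
  | base => norm_num
  | succ n hn ih =>
    have h2 : n+1-1 = (n-1)+1 := by omega
    rw [h2, pow_succ]
    have h3 : n - 1 + 1 = n := by omega
    have : 1 ≤ 2^(n-1) := Nat.one_le_two_pow
    omega

/-- the gamma sequence -/
private def gam (r : ℕ) : ℕ → ℕ
  | 0 => 1
  | (k+1) => gam r k + min r (gam r k)

private lemma gam_pos (r k : ℕ) : 1 ≤ gam r k := by
  induction k with
  | zero => simp [gam]
  | succ n ih => simp only [gam]; omega

private lemma gam_pow {r : ℕ} : ∀ {k : ℕ}, k ≤ Nat.clog 2 r → 2^k ≤ gam r k := by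
  intro k
  induction k with
  | zero => intro _; simp [gam]
  | succ n ih =>
    intro hk
    have ihn := ih (by omega)
    rcases le_or_gt (gam r n) r with h | h
    · have hmin : min r (gam r n) = gam r n := min_eq_right h
      simp only [gam, hmin, pow_succ]
      omega
    · have hr1 : 1 < r := by
        by_contra hr
        push_neg at hr
        have : Nat.clog 2 r = 0 := by
          interval_cases r <;> simp [Nat.clog]
        omega
      have h2 : 2^n < r := by
        have hx := Nat.pow_pred_clog_lt_self (by norm_num : 1 < 2) hr1
        calc 2^n ≤ 2^(Nat.clog 2 r - 1) := Nat.pow_le_pow_right (by norm_num) (by omega)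
        _ < r := by
          have : (Nat.clog 2 r).pred = Nat.clog 2 r - 1 := rfl
          rw [← this]; exact hx
      have hmin : min r (gam r n) = r := min_eq_left h.le
      simp only [gam, hmin, pow_succ]
      omega

private lemma gam_sat (r : ℕ) : r ≤ gam r (Nat.clog 2 r) := by
  calc r ≤ 2^(Nat.clog 2 r) := Nat.le_pow_clog (by norm_num) r
  _ ≤ gam r (Nat.clog 2 r) := gam_pow le_rfl

private lemma gam_succ_clog (r : ℕ) : r + 2^(Nat.clog 2 r) ≤ gam r (Nat.clog 2 r + 1) := by
  have h1 := gam_sat r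
  have h2 := gam_pow (r := r) (k := Nat.clog 2 r) le_rfl
  simp only [gam, min_eq_left h1]
  omega

-- numeric bounds
private lemma exp_chord {a b w : ℝ} (h1 : a ≤ w) (h2 : w ≤ b) :
    (b-a)*Real.exp w ≤ (b-w)*Real.exp a + (w-a)*Real.exp b := by
  rcases eq_or_lt_of_le (h1.trans h2) with h | h
  · have hw : w = b := le_antisymm h2 (h ▸ h1)
    subst hw
    rw [← h, sub_self, zero_mul, zero_add]
  · have hba : 0 < b - a := by linarith
    have hc := convexOn_exp.2 (Set.mem_univ a) (Set.mem_univ b)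
      (show (0:ℝ) ≤ (b-w)/(b-a) from div_nonneg (by linarith) hba.le)
      (show (0:ℝ) ≤ (w-a)/(b-a) from div_nonneg (by linarith) hba.le)
      (show (b-w)/(b-a) + (w-a)/(b-a) = 1 by field_simp; ring)
    simp only [smul_eq_mul] at hc
    have harg : (b-w)/(b-a) * a + (w-a)/(b-a) * b = w := by field_simp; ring
    rw [harg] at hc
    have := mul_le_mul_of_nonneg_left hc hba.le
    calc (b-a)*Real.exp w ≤ (b-a) * ((b-w)/(b-a) * Real.exp a + (w-a)/(b-a) * Real.exp b) := this
    _ = (b-w)*Real.exp a + (w-a)*Real.exp b := by field_simp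

private lemma log2_lb : (0.6931:ℝ) ≤ Real.log 2 := by linarith [Real.log_two_gt_d9]
private lemma log2_ub : Real.log 2 ≤ (0.6932:ℝ) := by linarith [Real.log_two_lt_d9]

private lemma exp_0406 : (3/2:ℝ) ≤ Real.exp 0.406 := by
  have h := Real.sum_le_exp_of_nonneg (x := 0.406) (by norm_num) 5
  have h2 : (1.5:ℝ) ≤ ∑ i ∈ Finset.range 5, (0.406:ℝ)^i / i.factorial := by
    simp [Finset.sum_range_succ, Nat.factorial]
    norm_num
  linarith

private lemma log_three_halves_ub : Real.log (3/2) ≤ 0.406 := by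
  rw [Real.log_le_iff_le_exp (by norm_num)]
  exact exp_0406

private lemma exp_0549 : Real.exp 0.549 ≤ 1.7316 := by
  have h := Real.exp_bound (x := 0.549) (by rw [abs_of_nonneg] <;> norm_num) (n := 5) (by norm_num)
  have h2 := (abs_le.mp h).2
  have hs : ∑ m ∈ Finset.range 5, (0.549:ℝ)^m / m.factorial ≤ 1.7310638 := by
    simp [Finset.sum_range_succ, Nat.factorial]
    norm_num
  have he : (|0.549|:ℝ)^5 * (↑(Nat.succ 5) / ((Nat.factorial 5 : ℕ) * (5:ℕ) : ℝ)) ≤ 0.0005 := by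
    rw [abs_of_nonneg (by norm_num)]
    norm_num [Nat.factorial]
  have he2 : (|0.549|:ℝ)^5 * (↑(Nat.succ 5) / (↑(Nat.factorial 5) * (5:ℝ))) ≤ 0.0005 := by
    convert he using 3 <;> norm_num
  linarith

private lemma log_three_lb : (1.098:ℝ) ≤ Real.log 3 := by
  rw [Real.le_log_iff_exp_le (by norm_num)]
  have h : Real.exp 1.098 = Real.exp 0.549 * Real.exp 0.549 := by
    rw [← Real.exp_add]; norm_num
  rw [h]
  nlinarith [exp_0549, Real.exp_pos (0.549:ℝ)]

private lemma exp_01282 : Real.exp 0.1282 ≤ 1.137 := by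
  have h := Real.exp_bound (x := 0.1282) (by rw [abs_of_nonneg] <;> norm_num) (n := 4) (by norm_num)
  have h2 := (abs_le.mp h).2
  have hs : ∑ m ∈ Finset.range 4, (0.1282:ℝ)^m / m.factorial ≤ 1.136769 := by
    simp [Finset.sum_range_succ, Nat.factorial]
    norm_num
  have he2 : (|0.1282|:ℝ)^4 * (↑(Nat.succ 4) / (↑(Nat.factorial 4) * (4:ℝ))) ≤ 0.00002 := by
    rw [abs_of_nonneg (by norm_num)]
    norm_num [Nat.factorial]
  linarith

private lemma E0r {r : ℕ} (hr : 1 ≤ r) : (0.54:ℝ)*r ≤ 2^r*Real.log 2 := by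
  have h1 := nat_le_two_pow r
  have h2 : (0:ℝ) < 2^r := by positivity
  nlinarith [log2_lb]

private lemma c_ub {c : ℝ} (hc : 0 < c)
    (hceq : c * Real.exp (c / 2) * Real.log 3 = Real.log (3 / 2) * Real.log 2) :
    c ≤ 0.2564 := by
  have h1 : 1 ≤ Real.exp (c/2) := by
    have := Real.add_one_le_exp (c/2)
    linarith
  have h2 : Real.log (3/2) * Real.log 2 ≤ 0.406 * 0.6932 := by
    have hn1 : (0:ℝ) ≤ Real.log (3/2) := Real.log_nonneg (by norm_num)
    have hn2 : (0:ℝ) ≤ Real.log 2 := Real.log_nonneg (by norm_num)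
    nlinarith [log_three_halves_ub, log2_ub]
  have h3 : c * 1.098 ≤ c * (Real.exp (c/2) * Real.log 3) := by
    have : (1:ℝ)*1.098 ≤ Real.exp (c/2) * Real.log 3 := by
      nlinarith [log_three_lb]
    nlinarith [this]
  nlinarith [h3, h2, hceq]

private lemma exp_c_half {c : ℝ} (hc : 0 < c) (hcu : c ≤ 0.2564) :
    Real.exp (c/2) ≤ 1.137 := by
  have : Real.exp (c/2) ≤ Real.exp 0.1282 := Real.exp_le_exp.mpr (by linarith)
  linarith [exp_01282]

private lemma cr_pow_le {c : ℝ} (hc : 0 ≤ c) {r : ℕ} (hr : 1 ≤ r) :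
    c*r/2^r ≤ c/2 := by
  have h1 : (2:ℝ)*r ≤ 2^r := by exact_mod_cast nat_two_mul_le_pow hr
  have h2 : (0:ℝ) < 2^r := by positivity
  rw [div_le_div_iff₀ h2 (by norm_num)]
  nlinarith

private lemma concave_endpoint {C P Q a b w : ℝ} (h1 : a ≤ w) (h2 : w ≤ b) (hba : 0 < b - a)
    (hC : 0 ≤ C)
    (hFa : C*Real.exp a ≤ P*(2*a - Q)) (hFb : C*Real.exp b ≤ P*(2*b - Q)) :
    C*Real.exp w ≤ P*(2*w - Q) := by
  have hch := exp_chord h1 h2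
  have h3 := mul_le_mul_of_nonneg_left hch hC
  have h4 : (b-w)*(C*Real.exp a) ≤ (b-w)*(P*(2*a-Q)) :=
    mul_le_mul_of_nonneg_left hFa (by linarith)
  have h5 : (w-a)*(C*Real.exp b) ≤ (w-a)*(P*(2*b-Q)) :=
    mul_le_mul_of_nonneg_left hFb (by linarith)
  have hid : (b-w)*(P*(2*a-Q)) + (w-a)*(P*(2*b-Q)) = (b-a)*(P*(2*w-Q)) := by ring
  have h6 : (b-a)*(C*Real.exp w) ≤ (b-a)*(P*(2*w-Q)) := by nlinarith [h3, h4, h5, hid]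
  exact le_of_mul_le_mul_left h6 hba

/-- the core convexity inequality -/
private lemma core_ineq {r : ℕ} (hr : 2 ≤ r) {w : ℝ}
    (hw1 : ((r:ℝ)+1)*Real.log 2/2 ≤ w) (hw2 : w ≤ ((r:ℝ)+1)*Real.log 2) :
    (0.27:ℝ)*r*Real.exp w ≤ 2^r*(2*w - r*Real.log 2) := by
  have hLpos : (0:ℝ) < Real.log 2 := Real.log_pos (by norm_num)
  have hrpos : (0:ℝ) < r := by positivity
  have hpp : (0:ℝ) < (2:ℝ)^r := by positivity
  have hexpb : Real.exp (((r:ℝ)+1)*Real.log 2) = 2^(r+1) := by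
    have h : ((r:ℝ)+1)*Real.log 2 = ((r+1 : ℕ):ℝ)*Real.log 2 := by push_cast; ring
    rw [h, Real.exp_nat_mul, Real.exp_log (by norm_num)]
  have hexpa_sq : (Real.exp (((r:ℝ)+1)*Real.log 2/2))^2 = 2^(r+1) := by
    rw [sq, ← Real.exp_add]
    have h : ((r:ℝ)+1)*Real.log 2/2 + ((r:ℝ)+1)*Real.log 2/2 = ((r:ℝ)+1)*Real.log 2 := by ring
    rw [h, hexpb]
  have hFa : (0.27:ℝ)*r*Real.exp (((r:ℝ)+1)*Real.log 2/2)
      ≤ 2^r*(2*(((r:ℝ)+1)*Real.log 2/2) - r*Real.log 2) := by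
    have heq : 2*(((r:ℝ)+1)*Real.log 2/2) - r*Real.log 2 = Real.log 2 := by ring
    rw [heq]
    have hkey : ((0.27:ℝ)*r*Real.exp (((r:ℝ)+1)*Real.log 2/2))^2 ≤ ((2:ℝ)^r*Real.log 2)^2 := by
      have hexpansq : ((0.27:ℝ)*r*Real.exp (((r:ℝ)+1)*Real.log 2/2))^2
          = 0.0729*(r:ℝ)^2*(Real.exp (((r:ℝ)+1)*Real.log 2/2))^2 := by ring
      rw [hexpansq, hexpa_sq]
      have hsq : ((r:ℝ))^2 ≤ 2*2^r := by
        have := nat_sq_le_pow r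
        have h2 : (((2:ℕ)^(r+1) : ℕ) : ℝ) = 2*2^r := by push_cast; ring
        calc ((r:ℝ))^2 = ((r^2 : ℕ) : ℝ) := by push_cast; ring
        _ ≤ ((2^(r+1) : ℕ) : ℝ) := by exact_mod_cast this
        _ = 2*2^r := h2
      have hp : (2:ℝ)^(r+1) = 2*2^r := by ring
      rw [hp]
      have L2' : (0.2916:ℝ) ≤ Real.log 2*Real.log 2 := by nlinarith [log2_lb]
      have k1 : (0.0729:ℝ)*(r:ℝ)^2*(2*2^r) ≤ 0.0729*(2*2^r)*(2*2^r) := by nlinarith [hsq, hpp]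
      have k2 : ((2:ℝ)^r*2^r)*(0.2916:ℝ) ≤ ((2:ℝ)^r*2^r)*(Real.log 2*Real.log 2) :=
        mul_le_mul_of_nonneg_left L2' (by positivity)
      nlinarith [k1, k2]
    exact le_of_pow_le_pow_left₀ (by norm_num) (by positivity) hkey
  have hFb : (0.27:ℝ)*r*Real.exp (((r:ℝ)+1)*Real.log 2)
      ≤ 2^r*(2*(((r:ℝ)+1)*Real.log 2) - r*Real.log 2) := by
    rw [hexpb]
    have heq : 2*(((r:ℝ)+1)*Real.log 2) - r*Real.log 2 = ((r:ℝ)+2)*Real.log 2 := by ring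
    rw [heq]
    have hp : (2:ℝ)^(r+1) = 2*2^r := by ring
    rw [hp]
    have k1 : (0.54:ℝ)*r ≤ ((r:ℝ)+2)*Real.log 2 := by
      nlinarith [mul_le_mul_of_nonneg_left log2_lb (show (0:ℝ) ≤ (r:ℝ)+2 by positivity)]
    have k2 := mul_le_mul_of_nonneg_left k1 hpp.le
    nlinarith [k2]
  have hba : (0:ℝ) < ((r:ℝ)+1)*Real.log 2 - ((r:ℝ)+1)*Real.log 2/2 := by
    have : ((r:ℝ)+1)*Real.log 2 - ((r:ℝ)+1)*Real.log 2/2 = ((r:ℝ)+1)*Real.log 2/2 := by ring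
    rw [this]; positivity
  exact concave_endpoint hw1 hw2 hba (by positivity) hFa hFb

private lemma mahler_roots_nonneg (g : Polynomial ℤ) :
    0 ≤ (((g.map (Int.castRingHom ℂ)).roots).map
      (fun z => Real.log (max 1 (‖z‖)))).sum := by
  apply Multiset.sum_nonneg
  intro x hx
  obtain ⟨z, _, rfl⟩ := Multiset.mem_map.mp hx
  exact Real.log_nonneg (le_max_left _ _)

private lemma mahler_nonneg {g : Polynomial ℤ} (hg : g ≠ 0) : 0 ≤ mahlerMeasure g := by
  unfold _root_.mahlerMeasure
  have h1 : (1:ℝ) ≤ |(g.leadingCoeff : ℝ)| := by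
    have : g.leadingCoeff ≠ 0 := leadingCoeff_ne_zero.mpr hg
    have : 1 ≤ |g.leadingCoeff| := Int.one_le_abs this
    calc (1:ℝ) ≤ (|g.leadingCoeff| : ℝ) := by exact_mod_cast this
    _ = |(g.leadingCoeff : ℝ)| := by push_cast; ring
  have := Real.log_nonneg h1
  linarith [mahler_roots_nonneg g]

private lemma mahler_lead {g : Polynomial ℤ} :
    Real.log |(g.leadingCoeff : ℝ)| ≤ mahlerMeasure g := by
  unfold _root_.mahlerMeasure
  linarith [mahler_roots_nonneg g]

private lemma mahler_mul {a b : Polynomial ℤ} (ha : a ≠ 0) (hb : b ≠ 0) :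
    mahlerMeasure (a*b) = mahlerMeasure a + mahlerMeasure b := by
  have hinj : Function.Injective (Int.castRingHom ℂ) := Int.cast_injective
  have hma : a.map (Int.castRingHom ℂ) ≠ 0 := (Polynomial.map_ne_zero_iff hinj).mpr ha
  have hmb : b.map (Int.castRingHom ℂ) ≠ 0 := (Polynomial.map_ne_zero_iff hinj).mpr hb
  unfold _root_.mahlerMeasure
  rw [Polynomial.map_mul, Polynomial.roots_mul (mul_ne_zero hma hmb),
    leadingCoeff_mul, Multiset.map_add, Multiset.sum_add]
  have h1 : |((a.leadingCoeff * b.leadingCoeff : ℤ) : ℝ)| =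
      |(a.leadingCoeff:ℝ)| * |(b.leadingCoeff:ℝ)| := by
    push_cast; rw [abs_mul]
  rw [h1, Real.log_mul, ]
  · ring
  · simp only [ne_eq, abs_eq_zero, Int.cast_eq_zero]
    exact leadingCoeff_ne_zero.mpr ha
  · simp only [ne_eq, abs_eq_zero, Int.cast_eq_zero]
    exact leadingCoeff_ne_zero.mpr hb

private lemma mahler_neg (g : Polynomial ℤ) : mahlerMeasure (-g) = mahlerMeasure g := by
  unfold _root_.mahlerMeasure
  rw [Polynomial.map_neg, Polynomial.roots_neg, leadingCoeff_neg]
  push_cast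
  rw [abs_neg]

/-- a monic irreducible non-cyclotomic integer polynomial of positive degree
does not divide `X^N - 1`. -/
private lemma not_dvd_X_pow_sub_one {q : Polynomial ℤ} (hqm : q.Monic)
    (hirr : Irreducible q)
    (hqcyc : ∀ l : ℕ, 0 < l → ¬ (Polynomial.cyclotomic l ℤ ∣ q))
    {N : ℕ} (hN : 0 < N) : ¬ (q ∣ (X^N - 1)) := by
  intro hdvd
  have hprime : Prime q := UniqueFactorizationMonoid.irreducible_iff_prime.mp hirr
  rw [← Polynomial.prod_cyclotomic_eq_X_pow_sub_one hN ℤ] at hdvd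
  obtain ⟨δ, hδmem, hδdvd⟩ := hprime.exists_mem_finset_dvd hdvd
  have hδpos : 0 < δ := Nat.pos_of_mem_divisors hδmem
  have hirrδ : Irreducible (cyclotomic δ ℤ) := Polynomial.cyclotomic.irreducible hδpos
  obtain ⟨w, hw⟩ := hδdvd
  rcases hirrδ.isUnit_or_isUnit hw with h | h
  · exact hirr.not_isUnit h
  · apply hqcyc δ hδpos
    have hassoc : Associated q (cyclotomic δ ℤ) := ⟨h.unit, by rw [IsUnit.unit_spec, ← hw]⟩
    exact hassoc.symm.dvd

set_option maxHeartbeats 2000000 in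
private lemma main_irred (m : ℕ) (hm : 2 ≤ m) (n r : ℕ) (hn : 0 < n) (hr : 0 < r)
    (F : Polynomial ℤ) (q : Polynomial ℤ) (hqm : q.Monic) (hirr : Irreducible q)
    (hqf : q ∣ ((X^n - 1)^r + C (m:ℤ) * F))
    (hqcyc : ∀ l : ℕ, 0 < l → ¬ (Polynomial.cyclotomic l ℤ ∣ q))
    (c : ℝ) (hc : 0 < c)
    (hceq : c * Real.exp (c / 2) * Real.log 3 = Real.log (3 / 2) * Real.log 2) :
    c * q.natDegree ≤ (n:ℝ) * 2^r * mahlerMeasure q := by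
  have hd1 : 1 ≤ q.natDegree := by
    by_contra hdeg
    push_neg at hdeg
    have h0 : q.natDegree = 0 := by omega
    exact hirr.not_isUnit ((Polynomial.eq_one_of_monic_natDegree_zero hqm h0) ▸ isUnit_one)
  -- move to ℚ
  have hqQm : (q.map (Int.castRingHom ℚ)).Monic := hqm.map _
  have hirrQ : Irreducible (q.map (Int.castRingHom ℚ)) := by
    have := (Polynomial.Monic.irreducible_iff_irreducible_map_fraction_map (K := ℚ) hqm).mp hirr
    rwa [algebraMap_int_eq] at this
  haveI : Fact (Irreducible (q.map (Int.castRingHom ℚ))) := ⟨hirrQ⟩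
  have hqQne : (q.map (Int.castRingHom ℚ)) ≠ 0 := hqQm.ne_zero
  set θ : AdjoinRoot (q.map (Int.castRingHom ℚ)) := AdjoinRoot.root _ with hθdef
  haveI : Module.Finite ℚ (AdjoinRoot (q.map (Int.castRingHom ℚ))) :=
    (AdjoinRoot.powerBasis hqQne).finite
  have hdegmap : (q.map (Int.castRingHom ℚ)).natDegree = q.natDegree :=
    hqm.natDegree_map _
  have hfinrank : Module.finrank ℚ (AdjoinRoot (q.map (Int.castRingHom ℚ))) = q.natDegree := by
    rw [(AdjoinRoot.powerBasis hqQne).finrank, AdjoinRoot.powerBasis_dim, hdegmap]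
  -- θ is integral, and aeval θ of integer polys is integral
  have haevalq : (Polynomial.aeval θ) q = 0 := by
    have h1 : (Polynomial.aeval θ) (q.map (Int.castRingHom ℚ)) = 0 := by
      rw [hθdef, Polynomial.aeval_def]
      exact AdjoinRoot.eval₂_root _
    calc (Polynomial.aeval θ) q = (Polynomial.aeval θ) (q.map (algebraMap ℤ ℚ)) :=
          (Polynomial.aeval_map_algebraMap ℚ θ q).symm
    _ = 0 := by rw [algebraMap_int_eq]; exact h1
  have hθint : IsIntegral ℤ θ := ⟨q, hqm, by rwa [← Polynomial.aeval_def]⟩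
  have hint_aeval : ∀ P : Polynomial ℤ, IsIntegral ℤ ((Polynomial.aeval θ) P) := by
    intro P
    induction P using Polynomial.induction_on' with
    | add p q hp hq => rw [map_add]; exact hp.add hq
    | monomial i a =>
      rw [Polynomial.aeval_monomial]
      exact (isIntegral_algebraMap).mul (hθint.pow i)
  -- base identity
  have hfθ : ((θ^n - 1)^r : AdjoinRoot (q.map (Int.castRingHom ℚ)))
      = (m : AdjoinRoot (q.map (Int.castRingHom ℚ))) * (-(Polynomial.aeval θ F)) := by
    obtain ⟨t, ht⟩ := hqf
    have h0 : (Polynomial.aeval θ) ((X^n - 1)^r + C (m:ℤ) * F) = 0 := by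
      rw [ht, map_mul, haevalq, zero_mul]
    have e1 : (Polynomial.aeval θ) ((X^n - 1)^r : Polynomial ℤ) = (θ^n - 1)^r := by
      simp [map_pow, map_sub, Polynomial.aeval_X, map_one]
    have e2 : (Polynomial.aeval θ) (C (m:ℤ) * F)
        = (m : AdjoinRoot (q.map (Int.castRingHom ℚ))) * (Polynomial.aeval θ F) := by
      rw [map_mul, Polynomial.aeval_C]
      norm_num
    rw [map_add, e1, e2] at h0
    linear_combination h0
  -- step identity
  have hustep : ∀ j : ℕ, θ^(n*m^(j+1)) - 1 = (θ^(n*m^j) - 1) *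
      ((m:_) + (θ^(n*m^j) - 1) * (∑ t ∈ Finset.range m, ∑ l ∈ Finset.range t, (θ^(n*m^j))^l)) := by
    intro j
    have hpow : θ^(n*m^(j+1)) = (θ^(n*m^j))^m := by
      rw [← pow_mul]
      congr 1
      ring
    have hgeom : (θ^(n*m^j))^m - 1 = (∑ i ∈ Finset.range m, (θ^(n*m^j))^i) * (θ^(n*m^j) - 1) :=
      (geom_sum_mul _ m).symm
    have h1 : ∀ i : ℕ, ((θ^(n*m^j))^i - 1 : AdjoinRoot (q.map (Int.castRingHom ℚ)))
        = (∑ l ∈ Finset.range i, (θ^(n*m^j))^l) * (θ^(n*m^j) - 1) :=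
      fun i => (geom_sum_mul _ i).symm
    have hpsi : (∑ i ∈ Finset.range m, (θ^(n*m^j))^i)
        = (m:_) + (θ^(n*m^j) - 1) * (∑ t ∈ Finset.range m, ∑ l ∈ Finset.range t, (θ^(n*m^j))^l) := by
      calc (∑ i ∈ Finset.range m, (θ^(n*m^j))^i)
          = ∑ i ∈ Finset.range m, (1 + ((θ^(n*m^j))^i - 1)) := by
            apply Finset.sum_congr rfl; intros; ring
      _ = (m:_) + ∑ i ∈ Finset.range m, ((θ^(n*m^j))^i - 1) := by
            rw [Finset.sum_add_distrib, Finset.sum_const, Finset.card_range, nsmul_eq_mul, mul_one]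
      _ = (m:_) + (∑ t ∈ Finset.range m, (∑ l ∈ Finset.range t, (θ^(n*m^j))^l)) * (θ^(n*m^j) - 1) := by
            congr 1
            rw [Finset.sum_mul]
            exact Finset.sum_congr rfl (fun i _ => h1 i)
      _ = _ := by ring
    rw [hpow, hgeom, hpsi]
    ring
  -- integrality facts
  have hmint : IsIntegral ℤ ((m:ℕ) : AdjoinRoot (q.map (Int.castRingHom ℚ))) := by
    have hh : ((m:ℕ) : AdjoinRoot (q.map (Int.castRingHom ℚ))) = algebraMap ℤ _ ((m:ℕ):ℤ) := by
      simp
    rw [hh]; exact isIntegral_algebraMap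
  have hu_int : ∀ j : ℕ, IsIntegral ℤ (θ^(n*m^j) - 1) :=
    fun j => (hθint.pow _).sub isIntegral_one
  have hE_int : ∀ j : ℕ,
      IsIntegral ℤ (∑ t ∈ Finset.range m, ∑ l ∈ Finset.range t, (θ^(n*m^j))^l) := by
    intro j
    apply IsIntegral.sum
    intro t _
    apply IsIntegral.sum
    intro l _
    exact (hθint.pow _).pow _
  have hchoose_int : ∀ a : ℕ, IsIntegral ℤ ((a:ℕ) : AdjoinRoot (q.map (Int.castRingHom ℚ))) := by
    intro a
    have hh : ((a:ℕ) : AdjoinRoot (q.map (Int.castRingHom ℚ))) = algebraMap ℤ _ ((a:ℕ):ℤ) := by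
      simp
    rw [hh]; exact isIntegral_algebraMap
  -- divisibility
  have hdiv : ∀ j : ℕ, ∀ i e : ℕ, e * r + r ≤ i * gam r j →
      ∃ y, IsIntegral ℤ y ∧ (θ^(n*m^j) - 1)^i = (m:_)^e * y := by
    intro j
    induction j with
    | zero =>
      intro i e h
      simp only [gam, mul_one] at h
      have ht : e + 1 ≤ i / r := by
        rw [Nat.le_div_iff_mul_le hr]
        calc (e+1)*r = e*r + r := by ring
        _ ≤ i := h
      have hi : i = r * (i/r) + i % r := (Nat.div_add_mod i r).symm
      have hn0 : n * m^0 = n := by simp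
      rw [hn0]
      have hsplit : (θ^n - 1)^i = ((θ^n - 1)^r)^(i/r) * (θ^n - 1)^(i % r) := by
        rw [← pow_mul, ← pow_add, ← hi]
      refine ⟨(m:_)^(i/r - e) * ((-(Polynomial.aeval θ F))^(i/r) * (θ^n - 1)^(i % r)), ?_, ?_⟩
      · exact (hmint.pow _).mul (((hint_aeval F).neg.pow _).mul
          ((by simpa [hn0] using hu_int 0 : IsIntegral ℤ (θ^n - 1)).pow _))
      · rw [hsplit, hfθ, mul_pow, ← mul_assoc]
        have hmm : ((m:_) : AdjoinRoot (q.map (Int.castRingHom ℚ)))^(i/r)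
            = (m:_)^e * (m:_)^(i/r - e) := by
          rw [← pow_add]
          congr 1
          omega
        rw [hmm]
        ring
    | succ j ih =>
      intro i e h
      simp only [gam] at h
      rw [hustep j, mul_pow, add_pow, Finset.mul_sum]
      apply Finset.sum_induction _
        (fun x => ∃ y, IsIntegral ℤ y ∧ x = ((m:ℕ) : AdjoinRoot (q.map (Int.castRingHom ℚ)))^e * y)
      · rintro a b ⟨y1, hy1, rfl⟩ ⟨y2, hy2, rfl⟩
        exact ⟨y1 + y2, hy1.add hy2, by ring⟩
      · exact ⟨0, isIntegral_zero, by ring⟩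
      · intro l hl
        have hli : l ≤ i := by
          have := Finset.mem_range.mp hl
          omega
        rcases le_or_gt e l with hel | hel
        · -- enough m's directly
          refine ⟨(m:_)^(l - e) * ((θ^(n*m^j) - 1)^i *
            (((θ^(n*m^j) - 1) * (∑ t ∈ Finset.range m, ∑ x ∈ Finset.range t, (θ^(n*m^j))^x))^(i-l)
              * ((i.choose l : ℕ) : AdjoinRoot (q.map (Int.castRingHom ℚ))))), ?_, ?_⟩
          · exact (hmint.pow _).mul (((hu_int j).pow _).mul
              ((((hu_int j).mul (hE_int j)).pow _).mul (hchoose_int _)))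
          · have hmm : ((m:_) : AdjoinRoot (q.map (Int.castRingHom ℚ)))^l
                = (m:_)^e * (m:_)^(l - e) := by
              rw [← pow_add]; congr 1; omega
            rw [hmm]
            ring
        · -- use induction hypothesis
          have harith : (e - l) * r + r ≤ (2*i - l) * gam r j := by
            rcases le_total r (gam r j) with hc1 | hc1
            · rw [min_eq_left hc1] at h
              have hcast : ((i:ℤ) - l) * r ≤ ((i:ℤ) - l) * gam r j := by
                apply mul_le_mul_of_nonneg_left (by exact_mod_cast hc1)
                omega
              zify [hel.le, (show l ≤ 2*i by omega)]
              push_cast at h hcast ⊢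
              nlinarith [h, hcast]
            · rw [min_eq_right hc1] at h
              have hcast : ((i:ℤ) - l) * gam r j ≤ ((i:ℤ) - l) * r := by
                apply mul_le_mul_of_nonneg_left (by exact_mod_cast hc1)
                omega
              zify [hel.le, (show l ≤ 2*i by omega)]
              push_cast at h hcast ⊢
              nlinarith [h, hcast]
          obtain ⟨y', hy', heq⟩ := ih (2*i - l) (e - l) harith
          refine ⟨y' * ((∑ t ∈ Finset.range m, ∑ x ∈ Finset.range t, (θ^(n*m^j))^x)^(i-l)
              * ((i.choose l : ℕ) : AdjoinRoot (q.map (Int.castRingHom ℚ)))), ?_, ?_⟩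
          · exact hy'.mul (((hE_int j).pow _).mul (hchoose_int _))
          · have h2 : (θ^(n*m^j) - 1)^i * (θ^(n*m^j) - 1)^(i-l) = (θ^(n*m^j) - 1)^(2*i-l) := by
              rw [← pow_add]; congr 1; omega
            have hkey : (θ^(n*m^j) - 1)^i *
                ((θ^(n*m^j) - 1) * (∑ t ∈ Finset.range m, ∑ x ∈ Finset.range t, (θ^(n*m^j))^x))^(i-l)
                = (m:_)^(e-l) * (y' * (∑ t ∈ Finset.range m, ∑ x ∈ Finset.range t, (θ^(n*m^j))^x)^(i-l)) := by
              rw [mul_pow, ← mul_assoc, h2, heq]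
              ring
            have hmm : ((m:_) : AdjoinRoot (q.map (Int.castRingHom ℚ)))^l * (m:_)^(e-l)
                = (m:_)^e := by
              rw [← pow_add]; congr 1; omega
            calc (θ^(n*m^j) - 1)^i * ((m:_)^l *
                  ((θ^(n*m^j) - 1) * (∑ t ∈ Finset.range m, ∑ x ∈ Finset.range t, (θ^(n*m^j))^x))^(i-l)
                  * ((i.choose l : ℕ) : AdjoinRoot (q.map (Int.castRingHom ℚ))))
                = (m:_)^l * ((θ^(n*m^j) - 1)^i *
                    ((θ^(n*m^j) - 1) * (∑ t ∈ Finset.range m, ∑ x ∈ Finset.range t, (θ^(n*m^j))^x))^(i-l))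
                  * ((i.choose l : ℕ) : AdjoinRoot (q.map (Int.castRingHom ℚ))) := by ring
            _ = (m:_)^l * ((m:_)^(e-l) * (y' * (∑ t ∈ Finset.range m, ∑ x ∈ Finset.range t, (θ^(n*m^j))^x)^(i-l)))
                  * ((i.choose l : ℕ) : AdjoinRoot (q.map (Int.castRingHom ℚ))) := by rw [hkey]
            _ = ((m:_)^l * (m:_)^(e-l)) * (y' * ((∑ t ∈ Finset.range m, ∑ x ∈ Finset.range t, (θ^(n*m^j))^x)^(i-l)
                  * ((i.choose l : ℕ) : AdjoinRoot (q.map (Int.castRingHom ℚ))))) := by ring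
            _ = (m:_)^e * (y' * ((∑ t ∈ Finset.range m, ∑ x ∈ Finset.range t, (θ^(n*m^j))^x)^(i-l)
                  * ((i.choose l : ℕ) : AdjoinRoot (q.map (Int.castRingHom ℚ))))) := by rw [hmm]
  -- norm bound
  have hNB : ∀ N : ℕ, 0 < N → ∃ z : ℤ, z ≠ 0 ∧
      (algebraMap ℤ ℚ) z = Algebra.norm ℚ (θ^N - 1) ∧
      Real.log |(z:ℝ)| ≤ q.natDegree * Real.log 2 + N * mahlerMeasure q := by
    intro N hN
    have hxne : (θ^N - 1 : AdjoinRoot (q.map (Int.castRingHom ℚ))) ≠ 0 := by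
      intro hx
      have hroot : (Polynomial.aeval θ) ((X^N - 1 : Polynomial ℚ)) = 0 := by
        simp only [map_sub, map_pow, Polynomial.aeval_X, map_one]
        exact hx
      have hmin : minpoly ℚ θ ∣ (X^N - 1 : Polynomial ℚ) := minpoly.dvd ℚ θ hroot
      have hminq : minpoly ℚ θ = q.map (Int.castRingHom ℚ) := by
        exact (minpoly.eq_of_irreducible_of_monic hirrQ
          (by rw [hθdef, Polynomial.aeval_def]; exact AdjoinRoot.eval₂_root _) hqQm).symm
      rw [hminq] at hmin
      have hmod : ((X^N - 1 : Polynomial ℤ) %ₘ q) = 0 := by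
        have h1 : (((X^N - 1 : Polynomial ℤ)) %ₘ q).map (Int.castRingHom ℚ)
            = ((X^N - 1 : Polynomial ℚ)) %ₘ (q.map (Int.castRingHom ℚ)) := by
          rw [Polynomial.map_modByMonic _ hqm]
          congr 1
          simp
        have h2 : ((X^N - 1 : Polynomial ℚ)) %ₘ (q.map (Int.castRingHom ℚ)) = 0 :=
          (Polynomial.modByMonic_eq_zero_iff_dvd hqQm).mpr hmin
        have hinj : Function.Injective (Int.castRingHom ℚ) := Int.cast_injective
        apply Polynomial.map_injective _ hinj
        rw [h1, h2, Polynomial.map_zero]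
      have hdvd : q ∣ (X^N - 1 : Polynomial ℤ) := (Polynomial.modByMonic_eq_zero_iff_dvd hqm).mp hmod
      exact not_dvd_X_pow_sub_one hqm hirr hqcyc hN hdvd
    have hxint : IsIntegral ℤ (θ^N - 1 : AdjoinRoot (q.map (Int.castRingHom ℚ))) :=
      (hθint.pow _).sub isIntegral_one
    have hZint : IsIntegral ℤ (Algebra.norm ℚ (θ^N - 1 : AdjoinRoot (q.map (Int.castRingHom ℚ)))) :=
      Algebra.isIntegral_norm ℚ hxint
    obtain ⟨z, hz⟩ := IsIntegrallyClosed.isIntegral_iff.mp hZint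
    have hZne : Algebra.norm ℚ (θ^N - 1 : AdjoinRoot (q.map (Int.castRingHom ℚ))) ≠ 0 := by
      rw [Algebra.norm_ne_zero_iff]
      exact hxne
    have hzne : z ≠ 0 := by rintro rfl; rw [map_zero] at hz; exact hZne hz.symm
    refine ⟨z, hzne, hz, ?_⟩
    have hmapeq : q.map (Int.castRingHom ℂ) = (q.map (Int.castRingHom ℚ)).map (algebraMap ℚ ℂ) := by
      rw [Polynomial.map_map]
      congr 1
    have hsep : (q.map (Int.castRingHom ℂ)).Separable := by
      rw [hmapeq]; exact (hirrQ.separable).map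
    have hnodup := Polynomial.nodup_roots hsep
    have hsplits : Polynomial.Splits (q.map (Int.castRingHom ℂ)) :=
      IsAlgClosed.splits _
    have hcard : Multiset.card (q.map (Int.castRingHom ℂ)).roots = q.natDegree := by
      have hh := (Polynomial.splits_iff_card_roots.mp hsplits)
      rw [hh]
      exact hqm.natDegree_map _
    have hinjσ : Function.Injective
        (fun σ : (AdjoinRoot (q.map (Int.castRingHom ℚ)) →ₐ[ℚ] ℂ) => σ θ) := by
      intro σ1 σ2 hσ
      apply (AdjoinRoot.powerBasis hqQne).algHom_ext
      rw [AdjoinRoot.powerBasis_gen]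
      exact hσ
    have hmemσ : ∀ σ : (AdjoinRoot (q.map (Int.castRingHom ℚ)) →ₐ[ℚ] ℂ),
        σ θ ∈ (⟨(q.map (Int.castRingHom ℂ)).roots, hnodup⟩ : Finset ℂ) := by
      intro σ
      show σ θ ∈ (q.map (Int.castRingHom ℂ)).roots
      rw [Polynomial.mem_roots']
      constructor
      · rw [hmapeq]
        exact (hqQm.map _).ne_zero
      · have h1 : (Polynomial.aeval (σ θ)) q = 0 := by
          have h2 := Polynomial.aeval_algHom_apply (AlgHom.restrictScalars ℤ σ) θ q
          simp only [AlgHom.coe_restrictScalars'] at h2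
          rw [h2, haevalq, map_zero]
        rw [Polynomial.IsRoot.def, Polynomial.eval_map, ← algebraMap_int_eq, ← Polynomial.aeval_def]
        exact h1
    have himg : Finset.image (fun σ : (AdjoinRoot (q.map (Int.castRingHom ℚ)) →ₐ[ℚ] ℂ) => σ θ)
        Finset.univ = (⟨(q.map (Int.castRingHom ℂ)).roots, hnodup⟩ : Finset ℂ) := by
      apply Finset.eq_of_subset_of_card_le
      · intro w hw
        obtain ⟨σ, _, rfl⟩ := Finset.mem_image.mp hw
        exact hmemσ σ
      · rw [Finset.card_image_of_injective _ hinjσ, Finset.card_univ, AlgHom.card, hfinrank]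
        show Finset.card ⟨(q.map (Int.castRingHom ℂ)).roots, hnodup⟩ ≤ q.natDegree
        rw [Finset.card_mk, hcard]
    have hprod : (algebraMap ℚ ℂ) (Algebra.norm ℚ (θ^N - 1 : AdjoinRoot (q.map (Int.castRingHom ℚ))))
        = ∏ w ∈ (⟨(q.map (Int.castRingHom ℂ)).roots, hnodup⟩ : Finset ℂ), (w^N - 1) := by
      rw [Algebra.norm_eq_prod_embeddings, ← himg, Finset.prod_image (fun a _ b _ h => hinjσ h)]
      apply Finset.prod_congr rfl
      intro σ _
      rw [map_sub, map_pow, map_one]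
    have habs : ‖(algebraMap ℚ ℂ) (Algebra.norm ℚ (θ^N - 1 : AdjoinRoot (q.map (Int.castRingHom ℚ))))‖
        ≤ 2^(q.natDegree) * Real.exp (N * (∑ w ∈ (⟨(q.map (Int.castRingHom ℂ)).roots, hnodup⟩ : Finset ℂ),
            Real.log (max 1 (‖w‖)))) := by
      rw [hprod, norm_prod]
      have hstep : ∀ w ∈ (⟨(q.map (Int.castRingHom ℂ)).roots, hnodup⟩ : Finset ℂ),
          ‖w^N - 1‖ ≤ 2 * (max 1 (‖w‖))^N := by
        intro w _
        have h1 : ‖w^N - 1‖ ≤ ‖w^N‖ + 1 := by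
          have hh := norm_sub_le (w^N) 1
          simpa using hh
        have h2 : ‖w^N‖ = ‖w‖^N := norm_pow _ _
        have h3 : (‖w‖)^N ≤ (max 1 (‖w‖))^N :=
          pow_le_pow_left₀ (norm_nonneg _) (le_max_right _ _) _
        have h4 : (1:ℝ) ≤ (max 1 (‖w‖))^N := by
          have hh := pow_le_pow_left₀ (by norm_num : (0:ℝ) ≤ 1) (le_max_left 1 (‖w‖)) N
          simpa using hh
        linarith
      calc ∏ w ∈ (⟨(q.map (Int.castRingHom ℂ)).roots, hnodup⟩ : Finset ℂ), ‖w^N - 1‖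
          ≤ ∏ w ∈ (⟨(q.map (Int.castRingHom ℂ)).roots, hnodup⟩ : Finset ℂ), 2*(max 1 (‖w‖))^N :=
        Finset.prod_le_prod (fun w _ => norm_nonneg _) hstep
      _ = 2^((⟨(q.map (Int.castRingHom ℂ)).roots, hnodup⟩ : Finset ℂ).card)
          * ∏ w ∈ (⟨(q.map (Int.castRingHom ℂ)).roots, hnodup⟩ : Finset ℂ), (max 1 (‖w‖))^N := by
          rw [Finset.prod_mul_distrib, Finset.prod_const]
      _ = 2^(q.natDegree) * (∏ w ∈ (⟨(q.map (Int.castRingHom ℂ)).roots, hnodup⟩ : Finset ℂ),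
            (max 1 (‖w‖)))^N := by
          rw [show (⟨(q.map (Int.castRingHom ℂ)).roots, hnodup⟩ : Finset ℂ).card = q.natDegree from by
            rw [Finset.card_mk, hcard], ← Finset.prod_pow]
      _ = 2^(q.natDegree) * Real.exp (N * (∑ w ∈ (⟨(q.map (Int.castRingHom ℂ)).roots, hnodup⟩ : Finset ℂ),
            Real.log (max 1 (‖w‖)))) := by
          congr 1
          have hprodmax : (∏ w ∈ (⟨(q.map (Int.castRingHom ℂ)).roots, hnodup⟩ : Finset ℂ),
              (max 1 (‖w‖)))
              = Real.exp (∑ w ∈ (⟨(q.map (Int.castRingHom ℂ)).roots, hnodup⟩ : Finset ℂ),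
                Real.log (max 1 (‖w‖))) := by
            rw [Real.exp_sum]
            apply Finset.prod_congr rfl
            intro w _
            rw [Real.exp_log (by positivity)]
          rw [hprodmax, ← Real.exp_nat_mul]
    have hlhs : ‖(algebraMap ℚ ℂ) (Algebra.norm ℚ (θ^N - 1 : AdjoinRoot (q.map (Int.castRingHom ℚ))))‖
        = |(z:ℝ)| := by
      rw [← hz]
      have hcast : (algebraMap ℚ ℂ) ((algebraMap ℤ ℚ) z) = ((z:ℤ):ℂ) := by
        simp
      rw [hcast]
      rw [Complex.norm_intCast]
    have hS : mahlerMeasure q = ∑ w ∈ (⟨(q.map (Int.castRingHom ℂ)).roots, hnodup⟩ : Finset ℂ),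
        Real.log (max 1 (‖w‖)) := by
      unfold _root_.mahlerMeasure
      rw [hqm.leadingCoeff]
      norm_num
    rw [hlhs] at habs
    have hzabs_pos : (0:ℝ) < |(z:ℝ)| := abs_pos.mpr (by exact_mod_cast hzne)
    calc Real.log |(z:ℝ)|
        ≤ Real.log (2^(q.natDegree) * Real.exp (N * (∑ w ∈ (⟨(q.map (Int.castRingHom ℂ)).roots, hnodup⟩ : Finset ℂ),
            Real.log (max 1 (‖w‖))))) := Real.log_le_log hzabs_pos habs
    _ = q.natDegree * Real.log 2 + N * mahlerMeasure q := by
        rw [Real.log_mul (by positivity) (by positivity), Real.log_pow, Real.log_exp, hS]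
  -- Tool 1
  have hT1 : (q.natDegree:ℝ) * (Real.log m - r * Real.log 2) ≤ (n:ℝ) * r * mahlerMeasure q := by
    obtain ⟨z, hzne, hz, hzbound⟩ := hNB n hn
    have hvint : IsIntegral ℤ (-(Polynomial.aeval θ F)) := (hint_aeval F).neg
    have hwint : IsIntegral ℤ (Algebra.norm ℚ (-(Polynomial.aeval θ F))) :=
      Algebra.isIntegral_norm ℚ hvint
    obtain ⟨w, hw⟩ := IsIntegrallyClosed.isIntegral_iff.mp hwint
    have hmK' : ((m:ℕ) : AdjoinRoot (q.map (Int.castRingHom ℚ))) = algebraMap ℚ _ ((m:ℕ):ℚ) :=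
      (map_natCast _ m).symm
    have hnormmul : ((algebraMap ℤ ℚ) z)^r = ((m:ℚ))^(q.natDegree) * (algebraMap ℤ ℚ) w := by
      rw [hz, ← map_pow, hfθ, hmK', map_mul, Algebra.norm_algebraMap, hfinrank, hw]
    have hint_eq : z^r = (m:ℤ)^(q.natDegree) * w := by
      have hq2 : ((z:ℚ))^r = (((m:ℤ):ℚ))^(q.natDegree) * (w:ℚ) := by
        have h1 : (algebraMap ℤ ℚ) z = (z:ℚ) := rfl
        have h2 : (algebraMap ℤ ℚ) w = (w:ℚ) := rfl
        rw [h1, h2] at hnormmul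
        rw [hnormmul]
        norm_num
      exact_mod_cast hq2
    have hwne : w ≠ 0 := by
      rintro rfl
      rw [mul_zero] at hint_eq
      exact hzne (pow_eq_zero_iff (by omega : r ≠ 0) |>.mp hint_eq)
    have hmd : (m:ℤ)^(q.natDegree) ≤ |z|^r := by
      have h1 : |z|^r = (m:ℤ)^(q.natDegree) * |w| := by
        rw [← abs_pow, hint_eq, abs_mul, abs_pow, abs_of_nonneg (by positivity : (0:ℤ) ≤ (m:ℤ))]
      have h2 : (1:ℤ) ≤ |w| := Int.one_le_abs hwne
      calc (m:ℤ)^(q.natDegree) = (m:ℤ)^(q.natDegree) * 1 := by ring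
      _ ≤ (m:ℤ)^(q.natDegree) * |w| := by
          apply mul_le_mul_of_nonneg_left h2 (by positivity)
      _ = |z|^r := h1.symm
    have hlogz : (q.natDegree:ℝ) * Real.log m ≤ r * Real.log |(z:ℝ)| := by
      have h1 : ((m:ℝ))^(q.natDegree) ≤ |(z:ℝ)|^r := by
        have := hmd
        have hcast : (|z|:ℝ) = |(z:ℝ)| := by push_cast; ring
        calc ((m:ℝ))^(q.natDegree) = (((m:ℤ)^(q.natDegree) : ℤ) : ℝ) := by push_cast; ring
        _ ≤ ((|z|^r : ℤ) : ℝ) := by exact_mod_cast this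
        _ = |(z:ℝ)|^r := by push_cast; ring
      have h2 := Real.log_le_log (by positivity) h1
      rwa [Real.log_pow, Real.log_pow] at h2
    have h3 : (r:ℝ) * Real.log |(z:ℝ)|
        ≤ r*((q.natDegree:ℝ) * Real.log 2 + n * mahlerMeasure q) :=
      mul_le_mul_of_nonneg_left hzbound (by positivity)
    nlinarith [hlogz, h3]
  -- Tool 2
  have hT2 : ∀ k s e : ℕ, e * r + r ≤ s * gam r k →
      (q.natDegree:ℝ) * (e * Real.log m - s * Real.log 2)
        ≤ (n:ℝ) * (m:ℝ)^k * s * mahlerMeasure q := by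
    intro k s e hkse
    have hs1 : 0 < s := by
      rcases Nat.eq_zero_or_pos s with h | h
      · subst h; simp at hkse; omega
      · exact h
    have hNpos : 0 < n * m^k := Nat.mul_pos hn (Nat.pow_pos (by omega))
    obtain ⟨z, hzne, hz, hzbound⟩ := hNB (n*m^k) hNpos
    obtain ⟨y, hyint, hyeq⟩ := hdiv k s e hkse
    have hwint : IsIntegral ℤ (Algebra.norm ℚ y) := Algebra.isIntegral_norm ℚ hyint
    obtain ⟨w, hw⟩ := IsIntegrallyClosed.isIntegral_iff.mp hwint
    have hmK' : ((m:ℕ) : AdjoinRoot (q.map (Int.castRingHom ℚ))) = algebraMap ℚ _ ((m:ℕ):ℚ) :=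
      (map_natCast _ m).symm
    have hnormmul : ((algebraMap ℤ ℚ) z)^s = ((m:ℚ))^(e*q.natDegree) * (algebraMap ℤ ℚ) w := by
      rw [hz, ← map_pow, hyeq, hmK', ← map_pow, map_mul, Algebra.norm_algebraMap,
        hfinrank, hw, ← pow_mul]
    have hint_eq : z^s = (m:ℤ)^(e*q.natDegree) * w := by
      have hq2 : ((z:ℚ))^s = (((m:ℤ):ℚ))^(e*q.natDegree) * (w:ℚ) := by
        have h1 : (algebraMap ℤ ℚ) z = (z:ℚ) := rfl
        have h2 : (algebraMap ℤ ℚ) w = (w:ℚ) := rfl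
        rw [h1, h2] at hnormmul
        rw [hnormmul]
        norm_num
      exact_mod_cast hq2
    have hwne : w ≠ 0 := by
      rintro rfl
      rw [mul_zero] at hint_eq
      exact hzne (pow_eq_zero_iff (by omega : s ≠ 0) |>.mp hint_eq)
    have hmd : (m:ℤ)^(e*q.natDegree) ≤ |z|^s := by
      have h1 : |z|^s = (m:ℤ)^(e*q.natDegree) * |w| := by
        rw [← abs_pow, hint_eq, abs_mul, abs_pow, abs_of_nonneg (by positivity : (0:ℤ) ≤ (m:ℤ))]
      have h2 : (1:ℤ) ≤ |w| := Int.one_le_abs hwne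
      calc (m:ℤ)^(e*q.natDegree) = (m:ℤ)^(e*q.natDegree) * 1 := by ring
      _ ≤ (m:ℤ)^(e*q.natDegree) * |w| := by
          apply mul_le_mul_of_nonneg_left h2 (by positivity)
      _ = |z|^s := h1.symm
    have hlogz : ((e*q.natDegree : ℕ):ℝ) * Real.log m ≤ s * Real.log |(z:ℝ)| := by
      have h1 : ((m:ℝ))^(e*q.natDegree) ≤ |(z:ℝ)|^s := by
        calc ((m:ℝ))^(e*q.natDegree) = (((m:ℤ)^(e*q.natDegree) : ℤ) : ℝ) := by push_cast; ring
        _ ≤ ((|z|^s : ℤ) : ℝ) := by exact_mod_cast hmd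
        _ = |(z:ℝ)|^s := by push_cast; ring
      have h2 := Real.log_le_log (by positivity) h1
      rwa [Real.log_pow, Real.log_pow] at h2
    have h3 : (s:ℝ) * Real.log |(z:ℝ)|
        ≤ s*((q.natDegree:ℝ) * Real.log 2 + ((n*m^k : ℕ):ℝ) * mahlerMeasure q) :=
      mul_le_mul_of_nonneg_left hzbound (by positivity)
    have hcastN : ((n*m^k : ℕ):ℝ) = (n:ℝ)*(m:ℝ)^k := by push_cast; ring
    rw [hcastN] at h3
    have hcastE : ((e*q.natDegree : ℕ):ℝ) = (e:ℝ)*(q.natDegree:ℝ) := by push_cast; ring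
    rw [hcastE] at hlogz
    nlinarith [hlogz, h3]
  -- endgame
  have hμ0 : 0 ≤ mahlerMeasure q := mahler_nonneg hqm.ne_zero
  have hcu := c_ub hc hceq
  have hrR : (1:ℝ) ≤ (r:ℝ) := by exact_mod_cast hr
  have hmR : (2:ℝ) ≤ (m:ℝ) := by exact_mod_cast hm
  by_cases hI : (r:ℝ)*Real.log 2 + c*r/2^r ≤ Real.log m
  · -- case I : m large
    have h1 : (q.natDegree:ℝ) * (c*r/2^r) ≤ (n:ℝ)*r*mahlerMeasure q := by
      calc (q.natDegree:ℝ) * (c*r/2^r)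
          ≤ (q.natDegree:ℝ) * (Real.log m - r*Real.log 2) := by
            apply mul_le_mul_of_nonneg_left (by linarith) (by positivity)
      _ ≤ _ := hT1
    have hp : (0:ℝ) < 2^r := by positivity
    have h2 := mul_le_mul_of_nonneg_left h1 hp.le
    have heq : (2:ℝ)^r * ((q.natDegree:ℝ) * (c*(r:ℝ)/2^r)) = c*(q.natDegree:ℝ)*r := by
      field_simp
    have h3 : (c * (q.natDegree:ℝ)) * r ≤ ((n:ℝ)*2^r*mahlerMeasure q) * r := by
      nlinarith [h2, heq]
    have hrpos : (0:ℝ) < (r:ℝ) := by linarith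
    exact le_of_mul_le_mul_right h3 hrpos
  · -- case II : m small
    push_neg at hI
    have hm_real : (m:ℝ) < 2^r * 1.137 := by
      have h1 : Real.log m < (r:ℝ)*Real.log 2 + c/2 := by
        have := cr_pow_le hc.le hr
        linarith [hI]
      have h2 : (m:ℝ) = Real.exp (Real.log m) := (Real.exp_log (by positivity)).symm
      calc (m:ℝ) = Real.exp (Real.log m) := h2
      _ < Real.exp ((r:ℝ)*Real.log 2 + c/2) := Real.exp_lt_exp.mpr h1
      _ = 2^r * Real.exp (c/2) := by
          rw [Real.exp_add]
          congr 1
          rw [show ((r:ℕ):ℝ)*Real.log 2 = ((r:ℕ):ℝ)*Real.log 2 from rfl, Real.exp_nat_mul,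
            Real.exp_log (by norm_num : (0:ℝ) < 2)]
      _ ≤ 2^r*1.137 := by
          have := exp_c_half hc hcu
          have hp : (0:ℝ) < 2^r := by positivity
          nlinarith
    -- regime inequality
    obtain ⟨k, hk1, hreg⟩ : ∃ k : ℕ, 1 ≤ k ∧
        0.27*(r:ℝ)*(m:ℝ)^k ≤ 2^r*((gam r k:ℝ)*Real.log m - (r:ℝ)*Real.log 2) := by
      rcases eq_or_lt_of_le hm with hm2 | hm3
      · -- m = 2
        refine ⟨Nat.clog 2 r + 1, by omega, ?_⟩
        have hγ := gam_succ_clog r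
        have h1 : (2:ℝ)^(Nat.clog 2 r) ≤ (gam r (Nat.clog 2 r + 1) : ℝ) - r := by
          have hcast : ((r + 2^(Nat.clog 2 r) : ℕ):ℝ) ≤ ((gam r (Nat.clog 2 r + 1) : ℕ):ℝ) := by
            exact_mod_cast hγ
          push_cast at hcast
          linarith
        have hE := E0r hr
        have hlogm2 : Real.log m = Real.log 2 := by rw [← hm2]; norm_num
        have hmcast : (m:ℝ) = 2 := by rw [← hm2]; norm_num
        rw [hlogm2, hmcast]
        have hp0 : (0:ℝ) < (2:ℝ)^(Nat.clog 2 r) := by positivity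
        have hp1 : (0:ℝ) < (2:ℝ)^r := by positivity
        calc 0.27*(r:ℝ)*(2:ℝ)^(Nat.clog 2 r + 1) = (0.54*(r:ℝ))*(2:ℝ)^(Nat.clog 2 r) := by ring
        _ ≤ ((2:ℝ)^r*Real.log 2)*(2:ℝ)^(Nat.clog 2 r) := by
            apply mul_le_mul_of_nonneg_right hE hp0.le
        _ ≤ 2^r*((gam r (Nat.clog 2 r + 1):ℝ)*Real.log 2 - (r:ℝ)*Real.log 2) := by
            have hl2 : (0:ℝ) ≤ Real.log 2 := by linarith [log2_lb]
            nlinarith [h1, hl2, hp1]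
      · -- m ≥ 3
        have hm3' : 3 ≤ m := hm3
        have hr2 : 2 ≤ r := by
          by_contra hr1
          push_neg at hr1
          have hreq : r = 1 := by omega
          subst hreq
          have h3 : (3:ℝ) ≤ (m:ℝ) := by exact_mod_cast hm3'
          norm_num at hm_real
          linarith
        have hex : ∃ j, 2^(r+1) ≤ m^(2^j) := by
          refine ⟨Nat.clog 2 r, ?_⟩
          calc 2^(r+1) ≤ 3^r := nat_three_pow hr2
          _ ≤ 3^(2^(Nat.clog 2 r)) := Nat.pow_le_pow_right (by omega) (Nat.le_pow_clog (by norm_num) r)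
          _ ≤ m^(2^(Nat.clog 2 r)) := Nat.pow_le_pow_left (by omega) _
        have hkspec : 2^(r+1) ≤ m^(2^(Nat.find hex)) := Nat.find_spec hex
        have hkk0 : Nat.find hex ≤ Nat.clog 2 r := Nat.find_le (by
          calc 2^(r+1) ≤ 3^r := nat_three_pow hr2
          _ ≤ 3^(2^(Nat.clog 2 r)) := Nat.pow_le_pow_right (by omega) (Nat.le_pow_clog (by norm_num) r)
          _ ≤ m^(2^(Nat.clog 2 r)) := Nat.pow_le_pow_left (by omega) _)
        have hk1 : 1 ≤ Nat.find hex := by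
          rcases Nat.eq_zero_or_pos (Nat.find hex) with h0 | h
          · exfalso
            have hsp := hkspec
            rw [h0] at hsp
            simp only [pow_zero, pow_one] at hsp
            have hcc : ((2:ℝ))^(r+1) ≤ (m:ℝ) := by exact_mod_cast hsp
            have h2 : (2:ℝ)^(r+1) = 2^r*2 := by ring
            nlinarith [hm_real]
          · exact h
        refine ⟨Nat.find hex, hk1, ?_⟩
        have hγk : ((2:ℕ))^(Nat.find hex) ≤ gam r (Nat.find hex) := gam_pow hkk0
        have hlogm_nonneg : 0 ≤ Real.log m :=
          Real.log_nonneg (by exact_mod_cast (by omega : 1 ≤ m))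
        have hpow2cast : (2:ℝ)^(Nat.find hex) = 2*(2:ℝ)^(Nat.find hex - 1) := by
          have hh : Nat.find hex - 1 + 1 = Nat.find hex := by omega
          calc (2:ℝ)^(Nat.find hex) = (2:ℝ)^(Nat.find hex - 1 + 1) := by rw [hh]
          _ = 2*(2:ℝ)^(Nat.find hex - 1) := by rw [pow_succ]; ring
        have hvlow : ((r:ℝ)+1)*Real.log 2/2 ≤ (2:ℝ)^(Nat.find hex - 1) * Real.log m := by
          have h1 : ((2:ℝ))^(r+1) ≤ (m:ℝ)^((2:ℕ)^(Nat.find hex) : ℕ) := by exact_mod_cast hkspec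
          have h2 := Real.log_le_log (by positivity) h1
          rw [Real.log_pow, Real.log_pow] at h2
          push_cast at h2
          rw [hpow2cast] at h2
          linarith
        have hvhigh : (2:ℝ)^(Nat.find hex - 1) * Real.log m ≤ ((r:ℝ)+1)*Real.log 2 := by
          rcases Nat.eq_or_lt_of_le hk1 with hk1' | hk2
          · rw [← hk1']
            norm_num
            have h1 : c*r/2^r ≤ c/2 := cr_pow_le hc.le hr
            have h2 : c/2 ≤ Real.log 2 := by nlinarith [log2_lb, hcu]
            linarith [hI]
          · have hmin := Nat.find_min hex (show Nat.find hex - 1 < Nat.find hex by omega)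
            push_neg at hmin
            have h1 : ((m:ℝ))^((2:ℕ)^(Nat.find hex - 1) : ℕ) ≤ (2:ℝ)^(r+1) := by
              exact_mod_cast hmin.le
            have h2 := Real.log_le_log (by positivity) h1
            rw [Real.log_pow, Real.log_pow] at h2
            push_cast at h2
            linarith
        have hcore := core_ineq hr2 hvlow hvhigh
        have hmk_exp : (m:ℝ)^(Nat.find hex) ≤ Real.exp ((2:ℝ)^(Nat.find hex - 1) * Real.log m) := by
          have h1 : (m:ℝ)^(Nat.find hex) = Real.exp ((Nat.find hex : ℝ) * Real.log m) := by
            rw [Real.exp_nat_mul, Real.exp_log (by positivity)]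
          rw [h1]
          apply Real.exp_le_exp.mpr
          apply mul_le_mul_of_nonneg_right _ hlogm_nonneg
          rcases Nat.eq_or_lt_of_le hk1 with hk1' | hk2
          · rw [← hk1']; norm_num
          · have := nat_k_le_pow (show 2 ≤ Nat.find hex by omega)
            calc ((Nat.find hex : ℕ):ℝ) ≤ ((2^(Nat.find hex - 1) : ℕ):ℝ) := by exact_mod_cast this
            _ = (2:ℝ)^(Nat.find hex - 1) := by push_cast; ring
        have h2v : 2*((2:ℝ)^(Nat.find hex - 1) * Real.log m) ≤ (gam r (Nat.find hex) : ℝ)*Real.log m := by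
          have h2 : ((2:ℕ)^(Nat.find hex) : ℝ) ≤ ((gam r (Nat.find hex) : ℕ) : ℝ) := by
            exact_mod_cast hγk
          push_cast at h2
          rw [hpow2cast] at h2
          nlinarith [hlogm_nonneg]
        calc 0.27*(r:ℝ)*(m:ℝ)^(Nat.find hex)
            ≤ 0.27*(r:ℝ)*Real.exp ((2:ℝ)^(Nat.find hex - 1) * Real.log m) := by
              apply mul_le_mul_of_nonneg_left hmk_exp (by positivity)
        _ ≤ 2^r*(2*((2:ℝ)^(Nat.find hex - 1) * Real.log m) - (r:ℝ)*Real.log 2) := hcore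
        _ ≤ 2^r*((gam r (Nat.find hex):ℝ)*Real.log m - (r:ℝ)*Real.log 2) := by
              apply mul_le_mul_of_nonneg_left _ (by positivity)
              linarith [h2v]
    -- final derivation from the regime inequality
    obtain ⟨W, hWdef⟩ : ∃ W : ℕ, W = 2^(r+7) := ⟨_, rfl⟩
    have hγpos := gam_pos r k
    have hWpos : 1 ≤ W := by rw [hWdef]; exact Nat.one_le_two_pow
    have hWγ : 1 ≤ W * gam r k := Nat.one_le_iff_ne_zero.mpr (by positivity)
    have harith : (W*gam r k - 1) * r + r ≤ (W*r) * gam r k := by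
      have h2 : r ≤ W*gam r k*r := by
        calc r = 1*r := (one_mul r).symm
        _ ≤ W*gam r k*r := Nat.mul_le_mul_right r hWγ
      have h1 : (W*gam r k - 1) * r + r = W*gam r k*r := by
        rw [Nat.sub_mul, one_mul, Nat.sub_add_cancel h2]
      rw [h1]
      exact le_of_eq (by ring)
    have htool := hT2 k (W*r) (W*gam r k - 1) harith
    have hecast : ((W*gam r k - 1 : ℕ):ℝ) = (W:ℝ)*(gam r k:ℝ) - 1 := by
      push_cast [Nat.cast_sub hWγ]
      ring
    have hWcast : ((W*r : ℕ):ℝ) = (W:ℝ)*(r:ℝ) := by push_cast; ring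
    have hWreal : (W:ℝ) = 128*(2:ℝ)^r := by
      rw [hWdef]
      push_cast [pow_add]
      ring
    have hlogm_le : Real.log m ≤ (m:ℝ) := by
      have := Real.log_le_sub_one_of_pos (show (0:ℝ) < m by positivity)
      linarith
    have hm_le_mk : (m:ℝ) ≤ (m:ℝ)^k := le_self_pow₀ (by linarith) (by omega)
    have hmkpos : (0:ℝ) < (m:ℝ)^k := by positivity
    have step1 : c * ((W:ℝ)*(r:ℝ)*(m:ℝ)^k)
        ≤ 2^r * (((W*gam r k - 1 : ℕ):ℝ)*Real.log m - ((W*r:ℕ):ℝ)*Real.log 2) := by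
      rw [hecast, hWcast]
      have hexpand : (2:ℝ)^r * (((W:ℝ)*(gam r k:ℝ) - 1)*Real.log m - ((W:ℝ)*(r:ℝ))*Real.log 2)
          = (W:ℝ)*((2:ℝ)^r*((gam r k:ℝ)*Real.log m - (r:ℝ)*Real.log 2)) - (2:ℝ)^r*Real.log m := by
        ring
      rw [hexpand]
      have h1 : (W:ℝ)*(0.27*(r:ℝ)*(m:ℝ)^k)
          ≤ (W:ℝ)*((2:ℝ)^r*((gam r k:ℝ)*Real.log m - (r:ℝ)*Real.log 2)) :=
        mul_le_mul_of_nonneg_left hreg (by positivity)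
      have h2 : (2:ℝ)^r * Real.log m ≤ (0.27 - c)*(W:ℝ)*(r:ℝ)*(m:ℝ)^k := by
        rw [hWreal]
        have hcc : (0.0136:ℝ) ≤ 0.27 - c := by linarith [hcu]
        have h3 : Real.log m ≤ (r:ℝ)*(m:ℝ)^k := by
          calc Real.log m ≤ (m:ℝ) := hlogm_le
          _ ≤ (m:ℝ)^k := hm_le_mk
          _ = 1*(m:ℝ)^k := (one_mul _).symm
          _ ≤ (r:ℝ)*(m:ℝ)^k := mul_le_mul_of_nonneg_right hrR (by positivity)
        have hp : (0:ℝ) < (2:ℝ)^r := by positivity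
        have h4 := mul_le_mul_of_nonneg_left h3 hp.le
        nlinarith [h4, hcc, (by positivity : (0:ℝ) ≤ (2:ℝ)^r*((r:ℝ)*(m:ℝ)^k))]
      linarith [h1, h2]
    have hd0 : (0:ℝ) ≤ (q.natDegree:ℝ) := by positivity
    have step2 := mul_le_mul_of_nonneg_left step1 hd0
    have step3 := mul_le_mul_of_nonneg_left htool (by positivity : (0:ℝ) ≤ (2:ℝ)^r)
    have step4 : c * (q.natDegree:ℝ) * ((W:ℝ)*(r:ℝ)*(m:ℝ)^k)
        ≤ ((n:ℝ) * 2^r * mahlerMeasure q) * ((W:ℝ)*(r:ℝ)*(m:ℝ)^k) := by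
      have heq2 : (2:ℝ)^r * ((n:ℝ)*(m:ℝ)^k*((W*r:ℕ):ℝ)*mahlerMeasure q)
          = ((n:ℝ) * 2^r * mahlerMeasure q) * ((W:ℝ)*(r:ℝ)*(m:ℝ)^k) := by
        rw [hWcast]; ring
      nlinarith [step2, step3, heq2]
    have hposW : (0:ℝ) < (W:ℝ)*(r:ℝ)*(m:ℝ)^k := by
      have : (0:ℝ) < (W:ℝ) := by exact_mod_cast hWpos
      nlinarith [hmkpos]
    exact le_of_mul_le_mul_right step4 hposW

set_option maxHeartbeats 2000000 in
/-- Theorem: if `f ∈ ℤ[x]` has degree `nr`, `m ≥ 2`, `f ≡ (xⁿ - 1)^r (mod m)`, and `g`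
is a factor of `f` over `ℤ` having no cyclotomic factors, then
`μ(g) ≥ c·(deg g)/(n·2^r)` where `c` is the unique positive real with
`c·e^{c/2}·log 3 = log(3/2)·log 2`. -/
theorem mahler_ge_universal_bound (m : ℕ) (hm : 2 ≤ m)
    (n r : ℕ) (hn : 0 < n) (hr : 0 < r)
    (f : Polynomial ℤ) (hfdeg : f.natDegree = n * r)
    (hcong : ∀ i : ℕ, (m : ℤ) ∣ (f - (X ^ n - 1) ^ r).coeff i)
    (g : Polynomial ℤ) (hg : g ∣ f) (hcyc : NoCyclotomicFactor g)
    (c : ℝ) (hc : 0 < c)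
    (hceq : c * Real.exp (c / 2) * Real.log 3 = Real.log (3 / 2) * Real.log 2) :
    mahlerMeasure g ≥ c * (g.natDegree : ℝ) / ((n : ℝ) * 2 ^ r) := by
  have hf0 : f ≠ 0 := by
    intro h
    rw [h, Polynomial.natDegree_zero] at hfdeg
    have : 0 < n*r := Nat.mul_pos hn hr
    omega
  have hCdvd : C (m:ℤ) ∣ (f - (X^n - 1)^r) := (Polynomial.C_dvd_iff_dvd_coeff _ _).mpr hcong
  obtain ⟨F, hF⟩ := hCdvd
  have hfform : f = (X^n-1)^r + C (m:ℤ) * F := by rw [← hF]; ring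
  have claim : ∀ N : ℕ, ∀ g : Polynomial ℤ, g.natDegree = N → g ∣ f → NoCyclotomicFactor g →
      c * (g.natDegree:ℝ) ≤ (n:ℝ)*2^r*mahlerMeasure g := by
    intro N
    induction N using Nat.strong_induction_on with
    | _ N ih =>
      intro g hgN hgf hgcyc
      have hg0 : g ≠ 0 := by
        intro h
        rw [h] at hgf
        exact hf0 (zero_dvd_iff.mp hgf)
      rcases Nat.eq_zero_or_pos N with hN0 | hNpos
      · rw [hgN, hN0]
        simp only [Nat.cast_zero, mul_zero]
        exact mul_nonneg (by positivity) (mahler_nonneg hg0)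
      · rcases le_or_gt 2 |g.leadingCoeff| with hlead | hlead
        · -- big leading coefficient escape
          have hdnr : g.natDegree ≤ n*r := by
            have := Polynomial.natDegree_le_of_dvd hgf hf0
            omega
          have hμ : Real.log 2 ≤ mahlerMeasure g := by
            have hstep : (2:ℝ) ≤ |(g.leadingCoeff:ℝ)| := by
              calc (2:ℝ) ≤ ((|g.leadingCoeff| : ℤ) : ℝ) := by exact_mod_cast hlead
              _ = |(g.leadingCoeff:ℝ)| := by push_cast; ring
            have h2 := Real.log_le_log (by norm_num : (0:ℝ) < 2) hstep
            linarith [mahler_lead (g := g)]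
          have hcu := c_ub hc hceq
          have hE := E0r hr
          have h1 : c * (g.natDegree:ℝ) ≤ c*((n:ℝ)*r) := by
            apply mul_le_mul_of_nonneg_left _ hc.le
            calc ((g.natDegree:ℕ):ℝ) ≤ ((n*r : ℕ):ℝ) := by exact_mod_cast hdnr
            _ = (n:ℝ)*r := by push_cast; ring
          have h2 : c*((n:ℝ)*r) ≤ ((n:ℝ)*2^r)*Real.log 2 := by
            have hcr : c*(r:ℝ) ≤ 2^r*Real.log 2 := by nlinarith [hE, hcu, (show (1:ℝ) ≤ (r:ℝ) by exact_mod_cast hr)]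
            have := mul_le_mul_of_nonneg_left hcr (show (0:ℝ) ≤ (n:ℝ) by positivity)
            nlinarith [this]
          have h3 : ((n:ℝ)*2^r)*Real.log 2 ≤ (n:ℝ)*2^r*mahlerMeasure g := by
            apply mul_le_mul_of_nonneg_left hμ (by positivity)
          linarith
        · -- leading coefficient ±1
          have hlead0 : g.leadingCoeff ≠ 0 := leadingCoeff_ne_zero.mpr hg0
          have habs1 : |g.leadingCoeff| ≤ 1 := by omega
          have hlead1 : g.leadingCoeff = 1 ∨ g.leadingCoeff = -1 := by
            rcases Int.abs_le_one_iff.mp habs1 with h | h | h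
            · exact absurd h hlead0
            · exact Or.inl h
            · exact Or.inr h
          obtain ⟨g', hg'm, hg'eq⟩ : ∃ g' : Polynomial ℤ, g'.Monic ∧ (g = g' ∨ g = -g') := by
            rcases hlead1 with h | h
            · exact ⟨g, h, Or.inl rfl⟩
            · refine ⟨-g, ?_, Or.inr (neg_neg g).symm⟩
              show (-g).leadingCoeff = 1
              rw [leadingCoeff_neg, h]
              ring
          have hg'0 : g' ≠ 0 := hg'm.ne_zero
          have hg'dvd : g' ∣ f := by
            rcases hg'eq with h | h
            · rw [← h]; exact hgf
            · have hgg : g' = -g := by rw [h]; ring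
              rw [hgg]; exact (neg_dvd).mpr hgf
          have hg'cyc : ∀ l, 0 < l → ¬ (Polynomial.cyclotomic l ℤ ∣ g') := by
            intro l hl hdvd
            apply hgcyc l hl
            rcases hg'eq with h | h
            · rw [h]; exact hdvd
            · rw [h]; exact (dvd_neg).mpr hdvd
          have hg'deg : g'.natDegree = N := by
            rcases hg'eq with h | h
            · rw [← h]; exact hgN
            · rw [show g' = -g from by rw [h]; ring, Polynomial.natDegree_neg]; exact hgN
          have hg'μ : mahlerMeasure g' = mahlerMeasure g := by
            rcases hg'eq with h | h
            · rw [h]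
            · rw [show g' = -g from by rw [h]; ring, mahler_neg]
          have hnotunit : ¬ IsUnit g' := by
            intro hu
            have h0 := Polynomial.natDegree_eq_zero_of_isUnit hu
            omega
          obtain ⟨p, hpirr, hpdvd⟩ := (WfDvdMonoid.exists_irreducible_factor hnotunit hg'0)
          obtain ⟨h, hh⟩ := hpdvd
          have hh0 : h ≠ 0 := by intro h0; rw [h0, mul_zero] at hh; exact hg'0 hh
          have hp0 : p ≠ 0 := by intro h0; rw [h0, zero_mul] at hh; exact hg'0 hh
          have hlead_ph : p.leadingCoeff * h.leadingCoeff = 1 := by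
            have h1 : g'.leadingCoeff = 1 := hg'm
            rw [hh, leadingCoeff_mul] at h1
            exact h1
          obtain ⟨q, h', hqm, hqirr, hfact⟩ :
              ∃ (q h' : Polynomial ℤ), q.Monic ∧ Irreducible q ∧ g' = q * h' := by
            have hu := IsUnit.of_mul_eq_one _ hlead_ph
            rcases Int.isUnit_iff.mp hu with h1 | h1
            · exact ⟨p, h, h1, hpirr, hh⟩
            · refine ⟨-p, -h, ?_, ?_, by rw [hh]; ring⟩
              · show (-p).leadingCoeff = 1
                rw [leadingCoeff_neg, h1]; ring
              · exact (show Associated p (-p) from ⟨-1, by simp⟩).irreducible hpirr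
          have hq0 : q ≠ 0 := hqm.ne_zero
          have hh'0 : h' ≠ 0 := by intro h0; rw [h0, mul_zero] at hfact; exact hg'0 hfact
          have hqdeg1 : 1 ≤ q.natDegree := by
            by_contra hq1
            push_neg at hq1
            have h0 : q.natDegree = 0 := by omega
            exact hqirr.not_isUnit ((Polynomial.eq_one_of_monic_natDegree_zero hqm h0) ▸ isUnit_one)
          have hdeg_split : q.natDegree + h'.natDegree = N := by
            rw [← hg'deg, hfact, Polynomial.natDegree_mul hq0 hh'0]
          have hqf' : q ∣ ((X^n-1)^r + C (m:ℤ)*F) := by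
            rw [← hfform]
            exact dvd_trans ⟨h', hfact⟩ hg'dvd
          have hqcyc' : ∀ l, 0 < l → ¬ (Polynomial.cyclotomic l ℤ ∣ q) := by
            intro l hl hdvd
            exact hg'cyc l hl (hdvd.trans ⟨h', hfact⟩)
          have hmain := main_irred m hm n r hn hr F q hqm hqirr hqf' hqcyc' c hc hceq
          have hh'dvd : h' ∣ f := dvd_trans ⟨q, by rw [hfact]; ring⟩ hg'dvd
          have hh'cyc : NoCyclotomicFactor h' := by
            intro l hl hdvd
            exact hg'cyc l hl (hdvd.trans ⟨q, by rw [hfact]; ring⟩)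
          have hh'lt : h'.natDegree < N := by omega
          have hih := ih h'.natDegree hh'lt h' rfl hh'dvd hh'cyc
          have hμsplit : mahlerMeasure g = mahlerMeasure q + mahlerMeasure h' := by
            rw [← hg'μ, hfact, mahler_mul hq0 hh'0]
          rw [hgN, hμsplit]
          have hcast : (N:ℝ) = (q.natDegree:ℝ) + (h'.natDegree:ℝ) := by
            exact_mod_cast hdeg_split.symm
          rw [hcast]
          nlinarith [hmain, hih]
  have hclaim := claim g.natDegree g rfl hg hcyc
  rw [ge_iff_le, div_le_iff₀ (by positivity)]
  linarith [hclaim]
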